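/- arXiv:1306.2394 — 5 statements merged into one kernel-verified Lean document; each statement's English description precedes it below -/
import Mathlib

section
/- Let g = g₁⋯g_p be a product of pairwise commuting elements, and suppose there are nonzero integers n₁,…,n_p such that all g_i^{n_i} are conjugate to each other and 1/n₁ + ⋯ + 1/n_p = 0. Then every homogeneous quasi-morphism H : G → ℝ satisfies H(g) = 0. -/
open Filter Finset
open scoped commutatorElement

def IsQuasimorphism {G : Type*} [Group G] (H : G → ℝ) : Prop :=
  ∃ D : ℝ, ∀ x y : G, |H (x * y) - H x - H y| ≤ D

noncomputable def defect {G : Type*} [Group G] (H : G → ℝ) : ℝ :=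
  sSup {d : ℝ | ∃ x y : G, d = |H (x * y) - H x - H y|}

def IsHomogeneousQM {G : Type*} [Group G] (H : G → ℝ) : Prop :=
  IsQuasimorphism H ∧ ∀ (g : G) (m : ℤ), H (g ^ m) = m * H g

def IsProdCommutators {G : Type*} [Group G] (g : G) (n : ℕ) : Prop :=
  ∃ a b : Fin n → G, g = (List.ofFn fun i => ⁅a i, b i⁆).prod

noncomputable def cl {G : Type*} [Group G] (g : G) : ℕ :=
  sInf {n : ℕ | IsProdCommutators g n}

noncomputable def scl {G : Type*} [Group G] (g : G) : ℝ :=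
  Filter.liminf (fun n : ℕ => (cl (g ^ n) : ℝ) / n) Filter.atTop

lemma abs_eq_zero_of_nat_mul (a C : ℝ) (h : ∀ m : ℕ, (m : ℝ) * |a| ≤ C) : a = 0 := by
  by_contra ha
  have h0 : 0 < |a| := abs_pos.mpr ha
  obtain ⟨m, hm⟩ := exists_nat_gt (C / |a|)
  have := h m
  have : (m : ℝ) ≤ C / |a| := (le_div_iff₀ h0).mpr this
  linarith

lemma hqm_pow {G : Type*} [Group G] {H : G → ℝ} (hH : IsHomogeneousQM H)
    (g : G) (m : ℕ) : H (g ^ m) = m * H g := by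
  have := hH.2 g m
  rwa [zpow_natCast] at this

lemma hqm_inv {G : Type*} [Group G] {H : G → ℝ} (hH : IsHomogeneousQM H)
    (g : G) : H g⁻¹ = -H g := by
  have := hH.2 g (-1)
  rwa [zpow_neg_one, Int.cast_neg, Int.cast_one, neg_one_mul] at this

lemma hqm_one {G : Type*} [Group G] {H : G → ℝ} (hH : IsHomogeneousQM H) :
    H 1 = 0 := by
  have := hH.2 1 0
  simpa using this

lemma hqm_conj {G : Type*} [Group G] {H : G → ℝ} (hH : IsHomogeneousQM H)
    (b a : G) : H (b * a * b⁻¹) = H a := by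
  obtain ⟨D, hD⟩ := hH.1
  have key : H (b * a * b⁻¹) - H a = 0 := by
    apply abs_eq_zero_of_nat_mul _ (2 * D)
    intro m
    have hpow : (b * a * b⁻¹) ^ m = b * (a ^ m * b⁻¹) := by
      rw [conj_pow, mul_assoc]
    have h1 := hD b (a ^ m * b⁻¹)
    have h2 := hD (a ^ m) b⁻¹
    have e1 : H ((b * a * b⁻¹) ^ m) = m * H (b * a * b⁻¹) := hqm_pow hH _ m
    have e2 : H (a ^ m) = m * H a := hqm_pow hH _ m
    have e3 : H b⁻¹ = -H b := hqm_inv hH b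
    have e0 : (m : ℝ) * H (b * a * b⁻¹) = H (b * (a ^ m * b⁻¹)) := by
      rw [← hpow, e1]
    have harg : (m : ℝ) * H (b * a * b⁻¹) - (m : ℝ) * H a
        = (H (b * (a ^ m * b⁻¹)) - H b - H (a ^ m * b⁻¹))
          + (H (a ^ m * b⁻¹) - H (a ^ m) - H b⁻¹) := by
      rw [e0, e2, e3]; ring
    have hstep : |(m : ℝ) * H (b * a * b⁻¹) - (m : ℝ) * H a| ≤ 2 * D := by
      rw [harg]
      have := abs_add_le (H (b * (a ^ m * b⁻¹)) - H b - H (a ^ m * b⁻¹))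
        (H (a ^ m * b⁻¹) - H (a ^ m) - H b⁻¹)
      linarith
    calc (m : ℝ) * |H (b * a * b⁻¹) - H a|
        = |(m : ℝ) * (H (b * a * b⁻¹) - H a)| := by
          rw [abs_mul, Nat.abs_cast]
      _ = |(m : ℝ) * H (b * a * b⁻¹) - (m : ℝ) * H a| := by congr 1; ring
      _ ≤ 2 * D := hstep
  linarith

lemma hqm_isConj {G : Type*} [Group G] {H : G → ℝ} (hH : IsHomogeneousQM H)
    {a c : G} (h : IsConj a c) : H a = H c := by
  obtain ⟨b, hb⟩ := h
  have h2 : (b : G) * a * (b : G)⁻¹ = c := by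
    rw [mul_inv_eq_iff_eq_mul]
    exact hb.eq
  rw [← h2, hqm_conj hH]

lemma hqm_commute {G : Type*} [Group G] {H : G → ℝ} (hH : IsHomogeneousQM H)
    {a b : G} (h : Commute a b) : H (a * b) = H a + H b := by
  obtain ⟨D, hD⟩ := hH.1
  have key : H (a * b) - (H a + H b) = 0 := by
    apply abs_eq_zero_of_nat_mul _ D
    intro m
    have hpow : (a * b) ^ m = a ^ m * b ^ m := h.mul_pow m
    have h1 := hD (a ^ m) (b ^ m)
    rw [← hpow, hqm_pow hH, hqm_pow hH, hqm_pow hH] at h1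
    calc (m : ℝ) * |H (a * b) - (H a + H b)|
        = |(m : ℝ) * (H (a * b) - (H a + H b))| := by
          rw [abs_mul, Nat.abs_cast]
      _ = |(m : ℝ) * H (a * b) - (m : ℝ) * H a - (m : ℝ) * H b| := by congr 1; ring
      _ ≤ D := h1
  linarith

lemma hqm_list {G : Type*} [Group G] {H : G → ℝ} (hH : IsHomogeneousQM H) :
    ∀ (p : ℕ) (gs : Fin p → G), (∀ i j, Commute (gs i) (gs j)) →
      H ((List.ofFn gs).prod) = ∑ i, H (gs i) := by
  intro p
  induction p with
  | zero => intro gs _; simp [hqm_one hH]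
  | succ q ih =>
      intro gs hcomm
      rw [List.ofFn_succ, List.prod_cons]
      have hc : Commute (gs 0) ((List.ofFn fun i => gs i.succ).prod) := by
        apply Commute.list_prod_right
        intro x hx
        simp only [List.mem_ofFn] at hx
        obtain ⟨i, rfl⟩ := hx
        exact hcomm 0 i.succ
      rw [hqm_commute hH hc, ih (fun i => gs i.succ) (fun i j => hcomm i.succ j.succ),
        Fin.sum_univ_succ]

theorem stmt2 {G : Type*} [Group G] (p : ℕ) (g : G) (gs : Fin p → G) (n : Fin p → ℤ)
    (hg : g = (List.ofFn gs).prod)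
    (hcomm : ∀ i j, Commute (gs i) (gs j))
    (hn : ∀ i, n i ≠ 0)
    (hconj : ∀ i j, IsConj (gs i ^ n i) (gs j ^ n j))
    (hsum : ∑ i, (1 : ℝ) / ((n i : ℝ)) = 0)
    (H : G → ℝ) (hH : IsHomogeneousQM H) : H g = 0 := by
  rw [hg, hqm_list hH p gs hcomm]
  rcases Nat.eq_zero_or_pos p with hp | hp
  · subst hp; simp
  · have i0 : Fin p := ⟨0, hp⟩
    set c : ℝ := (n i0 : ℝ) * H (gs i0) with hc
    have hval : ∀ i, H (gs i) = c / (n i : ℝ) := by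
      intro i
      have h1 : H (gs i ^ n i) = H (gs i0 ^ n i0) := hqm_isConj hH (hconj i i0)
      rw [hH.2, hH.2] at h1
      have hni : (n i : ℝ) ≠ 0 := Int.cast_ne_zero.mpr (hn i)
      field_simp [hc]
      linarith [mul_comm (H (gs i)) ((n i : ℝ))]
    calc ∑ i, H (gs i) = ∑ i, c * (1 / (n i : ℝ)) := by
          apply Finset.sum_congr rfl; intro i _
          rw [hval i]; ring
      _ = c * ∑ i, (1 : ℝ) / (n i : ℝ) := by rw [Finset.mul_sum]
      _ = 0 := by rw [hsum, mul_zero]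
end

section
/- If H : G → ℝ is a homogeneous quasi-morphism with defect Δ(H) and g ∈ [G,G], then scl(g) ≥ |H(g)| / (2Δ(H)). -/
open Filter Finset
open scoped commutatorElement

section Aux

variable {G : Type*} [Group G] {H : G → ℝ}

lemma qm_bound (hH : IsHomogeneousQM H) (x y : G) :
    |H (x * y) - H x - H y| ≤ defect H := by
  obtain ⟨D, hD⟩ := hH.1
  apply le_csSup
  · exact ⟨D, by rintro d ⟨a, b, rfl⟩; exact hD a b⟩
  · exact ⟨x, y, rfl⟩

lemma H_one (hH : IsHomogeneousQM H) : H 1 = 0 := by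
  simpa using hH.2 1 0

lemma H_inv (hH : IsHomogeneousQM H) (x : G) : H x⁻¹ = -H x := by
  simpa using hH.2 x (-1)

lemma H_pow (hH : IsHomogeneousQM H) (gg : G) (n : ℕ) : H (gg ^ n) = n * H gg := by
  have := hH.2 gg n
  rwa [zpow_natCast, Int.cast_natCast] at this

lemma defect_nonneg (hH : IsHomogeneousQM H) : 0 ≤ defect H :=
  le_trans (abs_nonneg _) (qm_bound hH 1 1)

lemma H_conj (hH : IsHomogeneousQM H) (x y : G) : H (x * y * x⁻¹) = H y := by
  set Δ := defect H with hΔ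
  have key : ∀ n : ℕ, (n : ℝ) * |H (x * y * x⁻¹) - H y| ≤ 2 * Δ := by
    intro n
    have h1 : H ((x * y * x⁻¹) ^ n) = n * H (x * y * x⁻¹) := H_pow hH _ n
    have h2 : H (y ^ n) = n * H y := H_pow hH _ n
    have e : (x * y * x⁻¹) ^ n = x * (y ^ n * x⁻¹) := by
      rw [conj_pow, mul_assoc]
    have b1 := qm_bound hH x (y ^ n * x⁻¹)
    have b2 := qm_bound hH (y ^ n) x⁻¹
    rw [← e] at b1
    have hinv : H x⁻¹ = -H x := H_inv hH x
    rw [h1] at b1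
    rw [hinv] at b2
    have : |(n : ℝ) * H (x * y * x⁻¹) - (n : ℝ) * H y| ≤ 2 * Δ := by
      have := abs_sub_abs_le_abs_sub ((n : ℝ) * H (x * y * x⁻¹)) ((n : ℝ) * H y)
      calc |(n : ℝ) * H (x * y * x⁻¹) - (n : ℝ) * H y|
          = |((n : ℝ) * H (x * y * x⁻¹) - H x - H (y ^ n * x⁻¹))
              + (H (y ^ n * x⁻¹) - H (y ^ n) - (-H x)) + (H (y ^ n) - (n : ℝ) * H y)| := by
            ring_nf
        _ ≤ |(n : ℝ) * H (x * y * x⁻¹) - H x - H (y ^ n * x⁻¹)|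
              + |H (y ^ n * x⁻¹) - H (y ^ n) - (-H x)| + |H (y ^ n) - (n : ℝ) * H y| := by
            exact abs_add_three _ _ _
        _ ≤ Δ + Δ + 0 := by
            refine add_le_add (add_le_add b1 b2) ?_
            simp [h2]
        _ = 2 * Δ := by ring
    rw [← mul_sub, abs_mul, abs_of_nonneg (by positivity : (0:ℝ) ≤ (n:ℝ))] at this
    exact this
  by_contra hne
  have hpos : 0 < |H (x * y * x⁻¹) - H y| := by
    rw [abs_pos]
    intro h; exact hne (by linarith [sub_eq_zero.mp h])
  obtain ⟨n, hn⟩ := exists_nat_gt ((2 * Δ) / |H (x * y * x⁻¹) - H y|)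
  have := key n
  rw [div_lt_iff₀ hpos] at hn
  linarith

lemma H_commutator (hH : IsHomogeneousQM H) (a b : G) : |H ⁅a, b⁆| ≤ defect H := by
  have e : ⁅a, b⁆ = (a * b * a⁻¹) * b⁻¹ := by
    exact commutatorElement_def a b
  have h := qm_bound hH (a * b * a⁻¹) b⁻¹
  rw [H_conj hH, H_inv hH, ← e] at h
  simpa using h

lemma H_list_prod (hH : IsHomogeneousQM H) (l : List G)
    (hl : ∀ x ∈ l, |H x| ≤ defect H) :
    |H l.prod| ≤ 2 * l.length * defect H := by
  induction l with
  | nil => simp [H_one hH]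
  | cons x t ih =>
    have hx := hl x (List.mem_cons_self)
    have ht := ih (fun y hy => hl y (List.mem_cons_of_mem x hy))
    have hb := qm_bound hH x t.prod
    have h3 : |H (x * t.prod)| ≤ |H (x * t.prod) - H x - H t.prod| + |H x| + |H t.prod| := by
      have h4 := abs_add_three (H (x * t.prod) - H x - H t.prod) (H x) (H t.prod)
      have e : H (x * t.prod) - H x - H t.prod + H x + H t.prod = H (x * t.prod) := by ring
      rwa [e] at h4
    have : |H (x * t.prod)| ≤ |H x| + |H t.prod| + defect H := by linarith
    simp only [List.prod_cons, List.length_cons]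
    push_cast
    linarith

/-- List characterization of `IsProdCommutators`. -/
lemma isProdCommutators_iff {g : G} {n : ℕ} :
    IsProdCommutators g n ↔
      ∃ l : List G, l.length = n ∧ (∀ x ∈ l, ∃ a b : G, x = ⁅a, b⁆) ∧ g = l.prod := by
  constructor
  · rintro ⟨a, b, rfl⟩
    refine ⟨List.ofFn fun i => ⁅a i, b i⁆, by simp, ?_, rfl⟩
    intro x hx
    rw [List.mem_ofFn] at hx
    obtain ⟨i, rfl⟩ := hx
    exact ⟨a i, b i, rfl⟩
  · rintro ⟨l, rfl, hl, rfl⟩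
    refine ⟨fun i => (hl (l.get i) (l.get_mem i)).choose,
            fun i => (hl (l.get i) (l.get_mem i)).choose_spec.choose, ?_⟩
    congr 1
    conv_lhs => rw [← List.ofFn_get l]
    congr 1
    funext i
    exact (hl (l.get i) (l.get_mem i)).choose_spec.choose_spec

lemma exists_prodCommutators {g : G} (hg : g ∈ commutator G) :
    ∃ n, IsProdCommutators g n := by
  rw [commutator_eq_closure] at hg
  have : ∃ l : List G, (∀ x ∈ l, ∃ a b : G, x = ⁅a, b⁆) ∧ g = l.prod := by
    induction hg using Subgroup.closure_induction with
    | mem x hx =>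
      obtain ⟨a, b, rfl⟩ := hx
      refine ⟨[⁅a, b⁆], ?_, by simp⟩
      intro x hx
      rw [List.mem_singleton] at hx
      exact ⟨a, b, hx⟩
    | one => exact ⟨[], by simp, by simp⟩
    | mul x y hx hy ihx ihy =>
      obtain ⟨l1, h1, rfl⟩ := ihx
      obtain ⟨l2, h2, rfl⟩ := ihy
      exact ⟨l1 ++ l2, by
        intro x hx
        rcases List.mem_append.mp hx with h | h
        exacts [h1 x h, h2 x h], by simp⟩
    | inv x hx ihx =>
      obtain ⟨l, h1, rfl⟩ := ihx
      refine ⟨(l.map (·⁻¹)).reverse, ?_, ?_⟩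
      · intro x hx
        rw [List.mem_reverse, List.mem_map] at hx
        obtain ⟨y, hy, rfl⟩ := hx
        obtain ⟨a, b, rfl⟩ := h1 y hy
        exact ⟨b, a, by group⟩
      · rw [List.prod_reverse_noncomm]
        simp
  obtain ⟨l, h1, h2⟩ := this
  exact ⟨l.length, isProdCommutators_iff.mpr ⟨l, rfl, h1, h2⟩⟩

lemma cl_spec {g : G} (hg : g ∈ commutator G) : IsProdCommutators g (cl g) :=
  Nat.sInf_mem (exists_prodCommutators hg)

lemma prodCommutators_pow {g : G} {m : ℕ} (h : IsProdCommutators g m) (n : ℕ) :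
    IsProdCommutators (g ^ n) (n * m) := by
  rw [isProdCommutators_iff] at h ⊢
  obtain ⟨l, hlen, hl, hprod⟩ := h
  refine ⟨(List.replicate n l).flatten, ?_, ?_, ?_⟩
  · simp [hlen, mul_comm]
  · intro x hx
    rw [List.mem_flatten] at hx
    obtain ⟨l', hl', hx⟩ := hx
    rw [List.eq_of_mem_replicate hl'] at hx
    exact hl x hx
  · rw [List.prod_flatten]
    simp [hprod, List.prod_replicate]

lemma cl_pow_le {g : G} (hg : g ∈ commutator G) (n : ℕ) : cl (g ^ n) ≤ n * cl g :=
  Nat.sInf_le (prodCommutators_pow (cl_spec hg) n)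

lemma H_le_of_prodCommutators (hH : IsHomogeneousQM H) {g : G} {n : ℕ}
    (h : IsProdCommutators g n) : |H g| ≤ 2 * n * defect H := by
  rw [isProdCommutators_iff] at h
  obtain ⟨l, rfl, hl, rfl⟩ := h
  apply H_list_prod hH
  intro x hx
  obtain ⟨a, b, rfl⟩ := hl x hx
  exact H_commutator hH a b

end Aux

theorem stmt4 {G : Type*} [Group G] (H : G → ℝ) (hH : IsHomogeneousQM H)
    (g : G) (hg : g ∈ commutator G) :
    |H g| / (2 * defect H) ≤ scl g := by
  have hΔ0 := defect_nonneg hH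
  have hbdd : Filter.IsCoboundedUnder (· ≥ ·) Filter.atTop
      (fun n : ℕ => (cl (g ^ n) : ℝ) / n) := by
    apply Filter.IsBoundedUnder.isCoboundedUnder_ge
    apply Filter.isBoundedUnder_of
    refine ⟨(cl g : ℝ), fun n => ?_⟩
    rcases Nat.eq_zero_or_pos n with rfl | hn
    · simp
    · rw [div_le_iff₀ (by positivity)]
      calc ((cl (g ^ n) : ℝ)) ≤ (n * cl g : ℕ) := by exact_mod_cast cl_pow_le hg n
        _ = (cl g : ℝ) * n := by push_cast; ring
  apply Filter.le_liminf_of_le hbdd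
  rw [Filter.eventually_atTop]
  refine ⟨1, fun n hn => ?_⟩
  have hgn : g ^ n ∈ commutator G := pow_mem hg n
  have hb : |H (g ^ n)| ≤ 2 * (cl (g ^ n)) * defect H :=
    H_le_of_prodCommutators hH (cl_spec hgn)
  rw [H_pow hH g n, abs_mul, abs_of_nonneg (by positivity : (0:ℝ) ≤ (n:ℝ))] at hb
  rcases eq_or_lt_of_le hΔ0 with hΔ | hΔ
  · rw [← hΔ]
    simp only [mul_zero, div_zero]
    positivity
  · have hn' : (0:ℝ) < n := by exact_mod_cast hn
    rw [div_le_div_iff₀ (by positivity) hn']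
    nlinarith
end

section
/- Let G be a group, H' : G' → ℝ a homogeneous quasi-morphism on a finite index normal subgroup G' of G, and define H(γ) = Σ_{i=1}^{s} H'(γ_i γ γ_i⁻¹) for coset representatives γ₁,…,γ_s of G/G'. Then H is a quasi-morphism on G' with defect at most s·Δ(H') and H is invariant under conjugation by elements of G up to a bounded error. -/
open Filter Finset
open scoped commutatorElement

theorem stmt7 {G : Type*} [Group G] (G' : Subgroup G) [G'.Normal]
    (s : ℕ) (γ : Fin s → G)
    (hcoset : Function.Bijective fun i : Fin s => (QuotientGroup.mk (γ i) : G ⧸ G'))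
    (H' : G → ℝ) (D : ℝ)
    (hdef : ∀ x ∈ G', ∀ y ∈ G', |H' (x * y) - H' x - H' y| ≤ D)
    (hhom : ∀ x ∈ G', ∀ m : ℤ, H' (x ^ m) = m * H' x) :
    (∀ x ∈ G', ∀ y ∈ G',
      |(∑ i, H' (γ i * (x * y) * (γ i)⁻¹)) - (∑ i, H' (γ i * x * (γ i)⁻¹)) -
        (∑ i, H' (γ i * y * (γ i)⁻¹))| ≤ s * D) ∧
    (∃ C : ℝ, ∀ β : G, ∀ x ∈ G',
      |(∑ i, H' (γ i * (β * x * β⁻¹) * (γ i)⁻¹)) - (∑ i, H' (γ i * x * (γ i)⁻¹))| ≤ C) := by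
  have hmem : ∀ (g : G), ∀ x ∈ G', g * x * g⁻¹ ∈ G' := fun g x hx =>
    Subgroup.Normal.conj_mem ‹G'.Normal› x hx g
  -- homogeneous quasimorphisms are conjugation invariant
  have hconj : ∀ a ∈ G', ∀ b ∈ G', H' (a * b * a⁻¹) = H' b := by
    intro a ha b hb
    have hainv : H' a⁻¹ = - H' a := by
      have := hhom a ha (-1)
      simpa using this
    have hbd : ∀ n : ℕ, (n : ℝ) * |H' (a * b * a⁻¹) - H' b| ≤ 2 * D := by
      intro n
      have h1 : |H' (a * b ^ n * a⁻¹) - H' (a * b ^ n) - H' a⁻¹| ≤ D :=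
        hdef _ (mul_mem ha (pow_mem hb n)) _ (inv_mem ha)
      have h2 : |H' (a * b ^ n) - H' a - H' (b ^ n)| ≤ D :=
        hdef a ha _ (pow_mem hb n)
      have h3 : H' ((a * b * a⁻¹) ^ n) = n * H' (a * b * a⁻¹) := by
        have := hhom _ (hmem a b hb) (n : ℤ)
        simpa [zpow_natCast] using this
      have h4 : H' (b ^ n) = n * H' b := by
        have := hhom b hb (n : ℤ)
        simpa [zpow_natCast] using this
      have h5 : (a * b * a⁻¹) ^ n = a * b ^ n * a⁻¹ := conj_pow
      have key : |H' (a * b ^ n * a⁻¹) - H' (b ^ n)| ≤ 2 * D := by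
        have e : H' (a * b ^ n * a⁻¹) - H' (b ^ n) =
            (H' (a * b ^ n * a⁻¹) - H' (a * b ^ n) - H' a⁻¹) +
            (H' (a * b ^ n) - H' a - H' (b ^ n)) := by rw [hainv]; ring
        rw [e]
        exact le_trans (abs_add_le _ _) (by linarith)
      calc (n : ℝ) * |H' (a * b * a⁻¹) - H' b|
          = |(n : ℝ) * (H' (a * b * a⁻¹) - H' b)| := by
            rw [abs_mul, abs_of_nonneg (by positivity : (0:ℝ) ≤ (n:ℝ))]
        _ = |H' (a * b ^ n * a⁻¹) - H' (b ^ n)| := by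
            rw [← h5, h3, h4]; ring_nf
        _ ≤ 2 * D := key
    by_contra h
    have hpos : 0 < |H' (a * b * a⁻¹) - H' b| :=
      abs_pos.mpr (sub_ne_zero.mpr h)
    obtain ⟨n, hn⟩ := exists_nat_gt ((2 * D) / |H' (a * b * a⁻¹) - H' b|)
    have := hbd n
    have : (2 * D) / |H' (a * b * a⁻¹) - H' b| < (n : ℝ) := hn
    have h2 : 2 * D < (n : ℝ) * |H' (a * b * a⁻¹) - H' b| := by
      rw [div_lt_iff₀ hpos] at this; linarith
    linarith [hbd n]
  constructor
  · intro x hx y hy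
    have hterm : ∀ i : Fin s,
        |H' (γ i * (x * y) * (γ i)⁻¹) - H' (γ i * x * (γ i)⁻¹) - H' (γ i * y * (γ i)⁻¹)| ≤ D := by
      intro i
      have e : γ i * (x * y) * (γ i)⁻¹ = (γ i * x * (γ i)⁻¹) * (γ i * y * (γ i)⁻¹) := by
        group
      rw [e]
      exact hdef _ (hmem _ x hx) _ (hmem _ y hy)
    calc |(∑ i, H' (γ i * (x * y) * (γ i)⁻¹)) - (∑ i, H' (γ i * x * (γ i)⁻¹)) -
          (∑ i, H' (γ i * y * (γ i)⁻¹))|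
        = |∑ i, (H' (γ i * (x * y) * (γ i)⁻¹) - H' (γ i * x * (γ i)⁻¹) -
            H' (γ i * y * (γ i)⁻¹))| := by rw [Finset.sum_sub_distrib, Finset.sum_sub_distrib]
      _ ≤ ∑ i, |H' (γ i * (x * y) * (γ i)⁻¹) - H' (γ i * x * (γ i)⁻¹) -
            H' (γ i * y * (γ i)⁻¹)| := Finset.abs_sum_le_sum_abs _ _
      _ ≤ ∑ _i : Fin s, D := Finset.sum_le_sum fun i _ => hterm i
      _ = s * D := by simp [mul_comm]
  · refine ⟨0, fun β x hx => ?_⟩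
    set e : Fin s ≃ G ⧸ G' := Equiv.ofBijective _ hcoset with he
    set σ : Fin s → Fin s := fun i => e.symm (QuotientGroup.mk (γ i * β)) with hσdef
    have hσ : ∀ i, (QuotientGroup.mk (γ (σ i)) : G ⧸ G') = QuotientGroup.mk (γ i * β) := by
      intro i
      show e (σ i) = _
      simp [hσdef]
    have hg : ∀ i, (γ (σ i))⁻¹ * (γ i * β) ∈ G' := fun i => QuotientGroup.eq.mp (hσ i)
    have hterm : ∀ i, H' (γ i * (β * x * β⁻¹) * (γ i)⁻¹) = H' (γ (σ i) * x * (γ (σ i))⁻¹) := by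
      intro i
      set c : G := γ (σ i) * ((γ (σ i))⁻¹ * (γ i * β)) * (γ (σ i))⁻¹ with hc
      have hcmem : c ∈ G' := hmem _ _ (hg i)
      have eq1 : γ i * (β * x * β⁻¹) * (γ i)⁻¹ =
          c * (γ (σ i) * x * (γ (σ i))⁻¹) * c⁻¹ := by
        rw [hc]; group
      rw [eq1]
      exact hconj c hcmem _ (hmem _ x hx)
    have hσinj : Function.Injective σ := by
      intro i j hij
      have := congrArg e hij
      simp only [hσdef, Equiv.apply_symm_apply] at this
      have h2 : (QuotientGroup.mk (γ i) : G ⧸ G') = QuotientGroup.mk (γ j) := by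
        have := mul_right_cancel (a := (QuotientGroup.mk (γ i) : G ⧸ G'))
          (b := QuotientGroup.mk β) (c := QuotientGroup.mk (γ j))
          (by rw [← QuotientGroup.mk_mul, ← QuotientGroup.mk_mul]; exact this)
        exact this
      exact hcoset.injective h2
    have hσbij : Function.Bijective σ := Finite.injective_iff_bijective.mp hσinj
    have hsum : (∑ i, H' (γ i * (β * x * β⁻¹) * (γ i)⁻¹)) = ∑ i, H' (γ i * x * (γ i)⁻¹) := by
      rw [Finset.sum_congr rfl fun i _ => hterm i]
      exact Fintype.sum_bijective σ hσbij _ _ fun i => rfl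
    rw [hsum, sub_self, abs_zero]
end

section
/- Let g be an element of a group G such that for some homogeneous quasi-morphism H : G → ℝ, H(g) ≠ 0. If g ∈ [G,G] then scl(g) > 0, and consequently the sequence cl(g^n) is unbounded. -/
open Filter Finset
open scoped commutatorElement

lemma ipc_one {G : Type*} [Group G] : IsProdCommutators (1 : G) 0 :=
  ⟨Fin.elim0, Fin.elim0, by simp⟩

lemma ipc_mul {G : Type*} [Group G] {x y : G} {m n : ℕ}
    (hx : IsProdCommutators x m) (hy : IsProdCommutators y n) :
    IsProdCommutators (x * y) (m + n) := by
  obtain ⟨a, b, rfl⟩ := hx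
  obtain ⟨c, d, rfl⟩ := hy
  refine ⟨Fin.append a c, Fin.append b d, ?_⟩
  rw [List.ofFn_add]
  simp [Fin.append_left, Fin.append_right]

lemma ipc_inv {G : Type*} [Group G] {x : G} {n : ℕ}
    (hx : IsProdCommutators x n) : IsProdCommutators x⁻¹ n := by
  induction n generalizing x with
  | zero =>
    obtain ⟨a, b, rfl⟩ := hx
    simpa using ipc_one
  | succ n ih =>
    obtain ⟨a, b, rfl⟩ := hx
    rw [List.ofFn_succ]
    have h1 : IsProdCommutators ((List.ofFn fun i : Fin n => ⁅a i.succ, b i.succ⁆).prod)⁻¹ n :=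
      ih ⟨fun i => a i.succ, fun i => b i.succ, rfl⟩
    have h2 : IsProdCommutators (⁅a 0, b 0⁆)⁻¹ 1 := by
      refine ⟨fun _ => b 0, fun _ => a 0, ?_⟩
      simp [commutatorElement_inv]
    have := ipc_mul h1 h2
    rw [List.prod_cons, mul_inv_rev] at *
    simpa [Nat.add_comm] using this

lemma ipc_pow {G : Type*} [Group G] {x : G} {m : ℕ}
    (hx : IsProdCommutators x m) (n : ℕ) : IsProdCommutators (x ^ n) (n * m) := by
  induction n with
  | zero => simpa using ipc_one
  | succ n ih =>
    have := ipc_mul ih hx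
    rw [pow_succ]
    simpa [Nat.succ_mul] using this

lemma mem_commutator_ipc {G : Type*} [Group G] {g : G} (hg : g ∈ commutator G) :
    ∃ n, IsProdCommutators g n := by
  rw [commutator_eq_closure] at hg
  induction hg using Subgroup.closure_induction with
  | mem x hx =>
    obtain ⟨a, b, rfl⟩ := hx
    exact ⟨1, fun _ => a, fun _ => b, by simp⟩
  | one => exact ⟨0, ipc_one⟩
  | mul x y _ _ hx hy =>
    obtain ⟨m, hm⟩ := hx; obtain ⟨n, hn⟩ := hy
    exact ⟨m + n, ipc_mul hm hn⟩
  | inv x _ hx =>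
    obtain ⟨m, hm⟩ := hx
    exact ⟨m, ipc_inv hm⟩

lemma qm_bound_s9 {G : Type*} [Group G] {H : G → ℝ} {D : ℝ}
    (hH : IsHomogeneousQM H) (hD : ∀ x y : G, |H (x * y) - H x - H y| ≤ D)
    {x : G} {n : ℕ} (hx : IsProdCommutators x n) : |H x| ≤ 4 * D * n := by
  have hone : H (1 : G) = 0 := by
    have := hH.2 1 0; simpa using this
  have hinv : ∀ y : G, H y⁻¹ = - H y := by
    intro y
    have := hH.2 y (-1)
    simpa [zpow_neg, zpow_one] using this
  have hD0 : 0 ≤ D := le_trans (abs_nonneg _) (hD 1 1)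
  -- bound on a single commutator
  have hcomm : ∀ a b : G, |H ⁅a, b⁆| ≤ 3 * D := by
    intro a b
    have h1 := hD (a * b * a⁻¹) b⁻¹
    have h2 := hD (a * b) a⁻¹
    have h3 := hD a b
    rw [hinv a, hinv b] at *
    have : ⁅a, b⁆ = a * b * a⁻¹ * b⁻¹ := commutatorElement_def a b
    rw [this]
    have := abs_sub_abs_le_abs_sub (H (a * b * a⁻¹ * b⁻¹)) 0
    calc |H (a * b * a⁻¹ * b⁻¹)|
        = |(H (a * b * a⁻¹ * b⁻¹) - H (a * b * a⁻¹) - (- H b))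
          + (H (a * b * a⁻¹) - H (a * b) - (- H a))
          + (H (a * b) - H a - H b)| := by ring_nf
      _ ≤ |(H (a * b * a⁻¹ * b⁻¹) - H (a * b * a⁻¹) - (- H b))
          + (H (a * b * a⁻¹) - H (a * b) - (- H a))|
          + |H (a * b) - H a - H b| := abs_add_le _ _
      _ ≤ (|H (a * b * a⁻¹ * b⁻¹) - H (a * b * a⁻¹) - (- H b)|
          + |H (a * b * a⁻¹) - H (a * b) - (- H a)|)
          + |H (a * b) - H a - H b| := by
            gcongr; exact abs_add_le _ _
      _ ≤ D + D + D := by gcongr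
      _ = 3 * D := by ring
  induction n generalizing x with
  | zero =>
    obtain ⟨a, b, rfl⟩ := hx
    simp [hone]
  | succ n ih =>
    obtain ⟨a, b, rfl⟩ := hx
    rw [List.ofFn_succ, List.prod_cons]
    set c := ⁅a 0, b 0⁆
    set r := (List.ofFn fun i : Fin n => ⁅a i.succ, b i.succ⁆).prod with hr
    have hrn : |H r| ≤ 4 * D * n := ih ⟨fun i => a i.succ, fun i => b i.succ, rfl⟩
    have h1 := hD c r
    calc |H (c * r)| = |(H (c * r) - H c - H r) + H c + H r| := by ring_nf
      _ ≤ |(H (c * r) - H c - H r) + H c| + |H r| := abs_add_le _ _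
      _ ≤ (|H (c * r) - H c - H r| + |H c|) + |H r| := by gcongr; exact abs_add_le _ _
      _ ≤ (D + 3 * D) + 4 * D * n := by gcongr; exact hcomm _ _
      _ ≤ 4 * D * (n + 1) := by nlinarith
    push_cast
    linarith [le_refl (0:ℝ)]

theorem stmt9 {G : Type*} [Group G] (g : G) (H : G → ℝ)
    (hH : IsHomogeneousQM H) (h0 : H g ≠ 0) (hg : g ∈ commutator G) :
    0 < scl g ∧ ¬ ∃ B : ℕ, ∀ n : ℕ, cl (g ^ n) ≤ B := by
  obtain ⟨D0, hD0⟩ := hH.1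
  set D : ℝ := max D0 1 with hDdef
  have hD : ∀ x y : G, |H (x * y) - H x - H y| ≤ D :=
    fun x y => le_trans (hD0 x y) (le_max_left _ _)
  have hDpos : (0:ℝ) < D := lt_of_lt_of_le one_pos (le_max_right _ _)
  obtain ⟨m, hm⟩ := mem_commutator_ipc hg
  -- key lower bound on cl (g ^ n)
  have key : ∀ n : ℕ, (n : ℝ) * |H g| ≤ 4 * D * cl (g ^ n) := by
    intro n
    have hne : IsProdCommutators (g ^ n) (cl (g ^ n)) := by
      have : {k : ℕ | IsProdCommutators (g ^ n) k}.Nonempty := ⟨n * m, ipc_pow hm n⟩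
      exact Nat.sInf_mem this
    have := qm_bound_s9 hH hD hne
    have hpow : H (g ^ n) = n * H g := by
      have := hH.2 g n
      simpa [zpow_natCast] using this
    rw [hpow, abs_mul, Nat.abs_cast] at this
    exact this
  -- upper bound: cl (g ^ n) ≤ n * m
  have upper : ∀ n : ℕ, cl (g ^ n) ≤ n * m := fun n => Nat.sInf_le (ipc_pow hm n)
  have habs : 0 < |H g| := abs_pos.mpr h0
  constructor
  · -- scl g > 0
    have hbd : ∀ n : ℕ, (cl (g ^ n) : ℝ) / n ≤ m := by
      intro n
      rcases Nat.eq_zero_or_pos n with rfl | hn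
      · simp
      · rw [div_le_iff₀ (by exact_mod_cast hn)]
        calc (cl (g ^ n) : ℝ) ≤ (n * m : ℕ) := by exact_mod_cast upper n
          _ = (m : ℝ) * n := by push_cast; ring
    have hcob : IsCoboundedUnder (· ≥ ·) atTop (fun n : ℕ => (cl (g ^ n) : ℝ) / n) :=
      isCoboundedUnder_ge_of_le atTop hbd
    have hev : ∀ᶠ n : ℕ in atTop, |H g| / (4 * D) ≤ (cl (g ^ n) : ℝ) / n := by
      filter_upwards [eventually_ge_atTop 1] with n hn
      have hn' : (0:ℝ) < n := by exact_mod_cast hn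
      rw [div_le_div_iff₀ (by positivity) hn']
      have := key n
      nlinarith [this]
    have : |H g| / (4 * D) ≤ scl g := le_liminf_of_le hcob hev
    have hpos : 0 < |H g| / (4 * D) := by positivity
    exact lt_of_lt_of_le hpos this
  · rintro ⟨B, hB⟩
    obtain ⟨n, hn⟩ := exists_nat_gt (4 * D * B / |H g|)
    have h1 : 4 * D * B / |H g| * |H g| < n * |H g| := by
      apply mul_lt_mul_of_pos_right hn habs
    rw [div_mul_cancel₀ _ (ne_of_gt habs)] at h1
    have h2 := key n
    have h3 : (cl (g ^ n) : ℝ) ≤ B := by exact_mod_cast hB n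
    nlinarith
end

section
/- Suppose g ∈ [G,G] can be written as g = h₁^{n₁} h₂^{n₂} ⋯ h_p^{n_p} where all h_i are pairwise conjugate (h_i = γ_i h_{i−1} γ_i⁻¹ for i ≥ 2), the factors pairwise commute, and n₁ + ⋯ + n_p = 0. Then g is a product of at most p − 1 commutators. -/
open Filter Finset
open scoped commutatorElement

theorem stmt10 {G : Type*} [Group G] (p : ℕ) (h γ : ℕ → G) (n : ℕ → ℤ) (g : G)
    (hg : g = ((List.range p).map fun i => h i ^ n i).prod)
    (hconj : ∀ i, 1 ≤ i → i < p → h i = γ i * h (i - 1) * (γ i)⁻¹)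
    (hcomm : ∀ i < p, ∀ j < p, Commute (h i ^ n i) (h j ^ n j))
    (hsum : ∑ i ∈ Finset.range p, n i = 0) :
    cl g ≤ p - 1 := by
  have ofFn_range : ∀ (m : ℕ) (F : ℕ → G),
      (List.ofFn fun i : Fin m => F i.val) = (List.range m).map F := by
    intro m F
    rw [List.ofFn_eq_map, ← List.map_coe_finRange_eq_range, List.map_map]
    rfl
  rcases Nat.eq_zero_or_pos p with hp0 | hp
  · subst hp0
    simp only [List.range_zero, List.map_nil, List.prod_nil] at hg
    subst hg
    apply Nat.sInf_le
    exact ⟨Fin.elim0, Fin.elim0, by simp⟩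
  -- telescoping identity
  have key : ∀ k, k < p →
      ((List.range k).map fun i =>
        ⁅h i ^ (∑ j ∈ Finset.range (i + 1), n j), γ (i + 1)⁆).prod
      = ((List.range k).map fun i => h i ^ n i).prod
        * h k ^ (-(∑ j ∈ Finset.range k, n j)) := by
    intro k
    induction k with
    | zero => simp
    | succ k ih =>
      intro hk
      have hk' : k < p := Nat.lt_of_succ_lt hk
      rw [List.range_succ, List.map_append, List.prod_append, ih hk']
      simp only [List.map_cons, List.map_nil, List.prod_cons, List.prod_nil, mul_one]
      have hc : h (k + 1) = γ (k + 1) * h k * (γ (k + 1))⁻¹ :=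
        hconj (k + 1) (Nat.le_add_left 1 k) hk
      have hcpow : ∀ m : ℤ, h (k + 1) ^ m = γ (k + 1) * h k ^ m * (γ (k + 1))⁻¹ := by
        intro m
        rw [hc, ← conj_zpow]
      have : ⁅h k ^ (∑ j ∈ Finset.range (k + 1), n j), γ (k + 1)⁆
          = h k ^ (∑ j ∈ Finset.range (k + 1), n j)
            * h (k + 1) ^ (-(∑ j ∈ Finset.range (k + 1), n j)) := by
        rw [commutatorElement_def, hcpow]
        group
      rw [this, Finset.sum_range_succ, List.map_append, List.prod_append]
      simp only [List.map_cons, List.map_nil, List.prod_cons, List.prod_nil, mul_one,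
        neg_add, zpow_add, zpow_neg, mul_assoc, inv_mul_cancel_left]
  apply Nat.sInf_le
  refine ⟨fun i : Fin (p - 1) => h i.val ^ (∑ j ∈ Finset.range (i.val + 1), n j),
    fun i : Fin (p - 1) => γ (i.val + 1), ?_⟩
  rw [ofFn_range (p - 1) (fun i => ⁅h i ^ (∑ j ∈ Finset.range (i + 1), n j), γ (i + 1)⁆)]
  have hp1 : p - 1 < p := Nat.sub_lt hp one_pos
  rw [key (p - 1) hp1]
  have hps : p = (p - 1) + 1 := (Nat.succ_pred_eq_of_pos hp).symm
  have hsum' : ∑ j ∈ Finset.range (p - 1), n j = -n (p - 1) := by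
    rw [hps, Finset.sum_range_succ] at hsum
    linarith
  rw [hsum', neg_neg, hg]
  conv_lhs => rw [hps]
  rw [List.range_succ, List.map_append, List.prod_append]
  simp
end
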